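/- Suppose a ∼_φ b. Then for every natural number n, the sets 𝒜_n and ℬ_n are finite and have the same cardinality. -/

import Mathlib

open scoped BigOperators

/-- The size `|λ| = Σ_i i·m_i(λ)` of a partition, identified with its
multiplicity function (a finitely supported function `ℕ+ →₀ ℕ`). -/
def psize (lam : ℕ+ →₀ ℕ) : ℕ := lam.sum fun i m => (i : ℕ) * m

/-- `λ ∈ 𝒜`: every multiplicity satisfies `m_i(λ) < a_i`
(automatic when `a_i = ∞`). -/
def InA (a : ℕ+ → ℕ∞) (lam : ℕ+ →₀ ℕ) : Prop := ∀ i, (lam i : ℕ∞) < a i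

/-- `a ∼_φ b` : the sequences `a, b` take values in `{1,2,…} ∪ {∞}`,
`φ` is a bijection from `supp(a) = {i : a_i < ∞}` onto `supp(b) = {j : b_j < ∞}`,
and `i·a_i = φ(i)·b_{φ(i)}` for all `i ∈ supp(a)`. -/
def PhiEquiv (a b : ℕ+ → ℕ∞) (phi : ℕ+ → ℕ+) : Prop :=
  (∀ i, a i ≠ 0) ∧ (∀ i, b i ≠ 0) ∧
  Set.BijOn phi {i | a i ≠ ⊤} {j | b j ≠ ⊤} ∧
  (∀ i, a i ≠ ⊤ → ((i : ℕ) : ℕ∞) * a i = ((phi i : ℕ) : ℕ∞) * b (phi i))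

namespace OharaAux

abbrev T : Type := ℕ+ →₀ ℕ

/-- natural-number truncation of `a i`. -/
def dd (a : ℕ+ → ℕ∞) (i : ℕ+) : ℕ := (a i).toNat

lemma dd_pos {a : ℕ+ → ℕ∞} {i : ℕ+} (h0 : a i ≠ 0) (ht : a i ≠ ⊤) : 0 < dd a i := by
  apply Nat.pos_of_ne_zero
  intro h
  rcases ENat.toNat_eq_zero.mp h with h | h
  exacts [h0 h, ht h]

lemma coe_dd {a : ℕ+ → ℕ∞} {i : ℕ+} (ht : a i ≠ ⊤) : ((dd a i : ℕ) : ℕ∞) = a i :=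
  ENat.coe_toNat ht

lemma dd_top {a : ℕ+ → ℕ∞} {i : ℕ+} (ht : a i = ⊤) : dd a i = 0 := by
  simp [dd, ht]

/-- `ν` has every multiplicity divisible by `a i` (and `0` where `a i = ∞`). -/
def Mult (a : ℕ+ → ℕ∞) (v : T) : Prop := ∀ i, dd a i ∣ v i

lemma Mult.eq_zero {a : ℕ+ → ℕ∞} {v : T} (h : Mult a v) {i : ℕ+} (ht : a i = ⊤) :
    v i = 0 := by
  have := h i
  rw [dd_top ht, zero_dvd_iff] at this
  exact this

lemma psize_add (f g : T) : psize (f + g) = psize f + psize g :=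
  Finsupp.sum_add_index' (fun _ => mul_zero _) (fun _ _ _ => mul_add _ _ _)

lemma psize_zero : psize (0 : T) = 0 := Finsupp.sum_zero_index

lemma psize_eq_zero {f : T} (h : psize f = 0) : f = 0 := by
  ext i
  rw [Finsupp.coe_zero, Pi.zero_apply]
  by_contra hi
  have hmem : i ∈ f.support := Finsupp.mem_support_iff.mpr hi
  have := (Finset.sum_eq_zero_iff.mp h) i hmem
  have hipos : 0 < (i : ℕ) := i.pos
  rcases Nat.mul_eq_zero.mp this with h' | h'
  · omega
  · exact hi h'

lemma inA_lt_iff {a : ℕ+ → ℕ∞} {i : ℕ+} (ht : a i ≠ ⊤) (m : ℕ) :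
    ((m : ℕ∞) < a i) ↔ m < dd a i := by
  rw [← coe_dd ht]
  exact Nat.cast_lt

/-- Finiteness of the set of partitions of `n`. -/
lemma finite_psize_eq (n : ℕ) : {lam : T | psize lam = n}.Finite := by
  classical
  have : Finite {lam : T // psize lam = n} := by
    let F : {lam : T // psize lam = n} → n.Partition := fun l =>
      { parts := l.1.toMultiset.map ((↑) : ℕ+ → ℕ)
        parts_pos := by
          intro x hx
          obtain ⟨i, _, rfl⟩ := Multiset.mem_map.mp hx
          exact i.pos
        parts_sum := by
          rw [Finsupp.toMultiset_map, Finsupp.sum_toMultiset,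
            Finsupp.sum_mapDomain_index_inj PNat.coe_injective]
          have : (Finsupp.sum l.1 fun a b => b • (a : ℕ)) = psize l.1 := by
            simp [psize, Finsupp.sum, mul_comm]
          rw [this, l.2] }
    have hF : Function.Injective F := by
      intro x y hxy
      have hparts := congrArg Nat.Partition.parts hxy
      apply Subtype.ext
      ext i
      have := congrArg (Multiset.count (i : ℕ)) hparts
      rwa [Multiset.count_map_eq_count' _ _ PNat.coe_injective,
        Multiset.count_map_eq_count' _ _ PNat.coe_injective,
        Finsupp.count_toMultiset, Finsupp.count_toMultiset] at this
    exact Finite.of_injective F hF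
  exact Set.finite_coe_iff.mp this

/-! ### The decomposition `λ = μ + ν` -/

noncomputable def muF (a : ℕ+ → ℕ∞) (lam : T) : T :=
  Finsupp.onFinset lam.support (fun i => lam i % dd a i)
    (fun i h => Finsupp.mem_support_iff.mpr (fun h0 => h (by simp [h0])))

noncomputable def nuF (a : ℕ+ → ℕ∞) (lam : T) : T :=
  Finsupp.onFinset lam.support (fun i => dd a i * (lam i / dd a i))
    (fun i h => Finsupp.mem_support_iff.mpr (fun h0 => h (by simp [h0])))

@[simp] lemma muF_apply (a : ℕ+ → ℕ∞) (lam : T) (i : ℕ+) :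
    muF a lam i = lam i % dd a i := rfl

@[simp] lemma nuF_apply (a : ℕ+ → ℕ∞) (lam : T) (i : ℕ+) :
    nuF a lam i = dd a i * (lam i / dd a i) := rfl

lemma muF_add_nuF (a : ℕ+ → ℕ∞) (lam : T) : muF a lam + nuF a lam = lam := by
  ext i
  simp [Nat.mod_add_div]

lemma inA_muF {a : ℕ+ → ℕ∞} (h0 : ∀ i, a i ≠ 0) (lam : T) : InA a (muF a lam) := by
  intro i
  by_cases ht : a i = ⊤
  · rw [ht]; exact ENat.coe_lt_top _
  · rw [inA_lt_iff ht]
    exact Nat.mod_lt _ (dd_pos (h0 i) ht)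

lemma mult_nuF (a : ℕ+ → ℕ∞) (lam : T) : Mult a (nuF a lam) :=
  fun i => Dvd.intro _ (by rw [nuF_apply, mul_comm])

lemma muF_add_eq {a : ℕ+ → ℕ∞} {μ ν : T} (hμ : InA a μ) (hν : Mult a ν) :
    muF a (μ + ν) = μ := by
  ext i
  rw [muF_apply, Finsupp.add_apply]
  by_cases ht : a i = ⊤
  · rw [dd_top ht, Nat.mod_zero, hν.eq_zero ht, add_zero]
  · obtain ⟨q, hq⟩ := hν i
    have hlt : μ i < dd a i := (inA_lt_iff ht _).mp (hμ i)
    rw [hq, Nat.add_mul_mod_self_left, Nat.mod_eq_of_lt hlt]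

lemma nuF_add_eq {a : ℕ+ → ℕ∞} {μ ν : T} (hμ : InA a μ) (hν : Mult a ν) :
    nuF a (μ + ν) = ν := by
  have h := muF_add_nuF a (μ + ν)
  rw [muF_add_eq hμ hν] at h
  exact add_left_cancel h

/-! ### The sets -/

def ASet (a : ℕ+ → ℕ∞) (n : ℕ) : Set T := {lam | InA a lam ∧ psize lam = n}
def NSet (a : ℕ+ → ℕ∞) (n : ℕ) : Set T := {v | Mult a v ∧ psize v = n}
def DSet (a : ℕ+ → ℕ∞) (n : ℕ) : Set (T × T) :=
  {p | InA a p.1 ∧ Mult a p.2 ∧ psize p.1 + psize p.2 = n}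

lemma ASet_finite (a : ℕ+ → ℕ∞) (n : ℕ) : (ASet a n).Finite :=
  (finite_psize_eq n).subset (fun _ h => h.2)

lemma NSet_finite (a : ℕ+ → ℕ∞) (n : ℕ) : (NSet a n).Finite :=
  (finite_psize_eq n).subset (fun _ h => h.2)

/-- The decomposition equivalence. -/
noncomputable def decompEquiv {a : ℕ+ → ℕ∞} (h0 : ∀ i, a i ≠ 0) (n : ℕ) :
    {lam : T // psize lam = n} ≃ ↥(DSet a n) where
  toFun l := ⟨(muF a l.1, nuF a l.1),
    ⟨inA_muF h0 _, mult_nuF _ _, by rw [← psize_add, muF_add_nuF, l.2]⟩⟩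
  invFun p := ⟨p.1.1 + p.1.2, by rw [psize_add]; exact p.2.2.2⟩
  left_inv l := Subtype.ext (muF_add_nuF a l.1)
  right_inv p := Subtype.ext (Prod.ext (muF_add_eq p.2.1 p.2.2.1) (nuF_add_eq p.2.1 p.2.2.1))

lemma DSet_finite {a : ℕ+ → ℕ∞} (h0 : ∀ i, a i ≠ 0) (n : ℕ) : (DSet a n).Finite := by
  have : Finite {lam : T // psize lam = n} := (finite_psize_eq n).to_subtype
  have : Finite ↥(DSet a n) := Finite.of_equiv _ (decompEquiv h0 n)
  exact Set.toFinite _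

/-- The convolution identity. -/
lemma dset_card {a : ℕ+ → ℕ∞} (h0 : ∀ i, a i ≠ 0) (n : ℕ) :
    Nat.card {lam : T | psize lam = n} =
      ∑ m ∈ Finset.range (n + 1), Nat.card (ASet a m) * Nat.card (NSet a (n - m)) := by
  classical
  have h1 : Nat.card {lam : T | psize lam = n} = Nat.card ↥(DSet a n) :=
    Nat.card_congr (decompEquiv h0 n)
  rw [h1, Nat.card_coe_set_eq, Set.ncard_eq_toFinset_card _ (DSet_finite h0 n)]
  have hext : (DSet_finite h0 n).toFinset =
      (Finset.range (n + 1)).biUnion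
        (fun m => (ASet_finite a m).toFinset ×ˢ (NSet_finite a (n - m)).toFinset) := by
    ext p
    simp only [Set.Finite.mem_toFinset, Finset.mem_biUnion, Finset.mem_product,
      Finset.mem_range, Nat.lt_succ_iff]
    constructor
    · rintro ⟨hp1, hp2, hp3⟩
      exact ⟨psize p.1, by omega, ⟨hp1, rfl⟩, hp2, by omega⟩
    · rintro ⟨m, hm, ⟨h1', h2'⟩, h3', h4'⟩
      exact ⟨h1', h3', by omega⟩
  rw [hext, Finset.card_biUnion]
  · refine Finset.sum_congr rfl (fun m _ => ?_)
    rw [Finset.card_product, Nat.card_coe_set_eq, Nat.card_coe_set_eq,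
      Set.ncard_eq_toFinset_card _ (ASet_finite a m),
      Set.ncard_eq_toFinset_card _ (NSet_finite a (n - m))]
  · intro m _ m' _ hne
    rw [Function.onFun, Finset.disjoint_left]
    rintro p hp hp'
    rw [Finset.mem_product, Set.Finite.mem_toFinset, Set.Finite.mem_toFinset] at hp hp'
    exact hne (hp.1.2.symm.trans hp'.1.2)

/-! ### Transport of `NSet` along a φ-equivalence -/

structure Good (a b : ℕ+ → ℕ∞) (phi ψ : ℕ+ → ℕ+) : Prop where
  ha0 : ∀ i, a i ≠ 0
  hb0 : ∀ i, b i ≠ 0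
  maps : ∀ i, a i ≠ ⊤ → b (phi i) ≠ ⊤
  maps' : ∀ j, b j ≠ ⊤ → a (ψ j) ≠ ⊤
  left : ∀ i, a i ≠ ⊤ → ψ (phi i) = i
  right : ∀ j, b j ≠ ⊤ → phi (ψ j) = j
  wt : ∀ i, a i ≠ ⊤ → ((i : ℕ) : ℕ∞) * a i = ((phi i : ℕ) : ℕ∞) * b (phi i)

lemma Good.symm {a b : ℕ+ → ℕ∞} {phi ψ : ℕ+ → ℕ+} (g : Good a b phi ψ) :
    Good b a ψ phi where
  ha0 := g.hb0
  hb0 := g.ha0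
  maps := g.maps'
  maps' := g.maps
  left := g.right
  right := g.left
  wt := by
    intro j hb
    have ha := g.maps' j hb
    have h := g.wt (ψ j) ha
    rw [g.right j hb] at h
    exact h.symm

lemma Good.wtNat {a b : ℕ+ → ℕ∞} {phi ψ : ℕ+ → ℕ+} (g : Good a b phi ψ)
    {i : ℕ+} (ha : a i ≠ ⊤) :
    (i : ℕ) * dd a i = (phi i : ℕ) * dd b (phi i) := by
  have hb := g.maps i ha
  have h := g.wt i ha
  rw [← coe_dd ha, ← coe_dd hb] at h
  exact_mod_cast h

lemma exists_good {a b : ℕ+ → ℕ∞} {phi : ℕ+ → ℕ+} (h : PhiEquiv a b phi) :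
    ∃ ψ, Good a b phi ψ := by
  obtain ⟨ha0, hb0, hbij, hwt⟩ := h
  refine ⟨Function.invFunOn phi {i | a i ≠ ⊤}, ha0, hb0, ?_, ?_, ?_, ?_, hwt⟩
  · intro i hi
    exact hbij.mapsTo hi
  · intro j hj
    obtain ⟨i, hi, rfl⟩ := hbij.surjOn hj
    rwa [hbij.injOn.leftInvOn_invFunOn hi]
  · intro i hi
    exact hbij.injOn.leftInvOn_invFunOn hi
  · intro j hj
    obtain ⟨i, hi, rfl⟩ := hbij.surjOn hj
    rw [hbij.injOn.leftInvOn_invFunOn hi]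

/-- Transport of a divisible partition along a `Good` pair. -/
noncomputable def Mmap (a b : ℕ+ → ℕ∞) (phi ψ : ℕ+ → ℕ+)
    (hinv : ∀ j, b j ≠ ⊤ → phi (ψ j) = j) (v : T) : T :=
  Finsupp.onFinset (v.support.image phi)
    (fun j => if hb : b j = ⊤ then 0 else dd b j * (v (ψ j) / dd a (ψ j)))
    (by
      intro j hj
      by_cases hb : b j = ⊤
      · simp [hb] at hj
      · rw [dif_neg hb] at hj
        have hψ : v (ψ j) ≠ 0 := by
          intro h0
          exact hj (by rw [h0, Nat.zero_div, mul_zero])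
        exact Finset.mem_image.mpr ⟨ψ j, Finsupp.mem_support_iff.mpr hψ, hinv j hb⟩)

lemma Mmap_apply_top {a b : ℕ+ → ℕ∞} {phi ψ : ℕ+ → ℕ+}
    {hinv : ∀ j, b j ≠ ⊤ → phi (ψ j) = j} {v : T} {j : ℕ+} (hb : b j = ⊤) :
    Mmap a b phi ψ hinv v j = 0 := by
  rw [Mmap, Finsupp.onFinset_apply, dif_pos hb]

lemma Mmap_apply_ne {a b : ℕ+ → ℕ∞} {phi ψ : ℕ+ → ℕ+}
    {hinv : ∀ j, b j ≠ ⊤ → phi (ψ j) = j} {v : T} {j : ℕ+} (hb : b j ≠ ⊤) :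
    Mmap a b phi ψ hinv v j = dd b j * (v (ψ j) / dd a (ψ j)) := by
  rw [Mmap, Finsupp.onFinset_apply, dif_neg hb]

lemma Mmap_apply_phi {a b : ℕ+ → ℕ∞} {phi ψ : ℕ+ → ℕ+} (g : Good a b phi ψ)
    {hinv : ∀ j, b j ≠ ⊤ → phi (ψ j) = j} {v : T} {i : ℕ+} (ha : a i ≠ ⊤) :
    Mmap a b phi ψ hinv v (phi i) = dd b (phi i) * (v i / dd a i) := by
  rw [Mmap_apply_ne (g.maps i ha), g.left i ha]

lemma mult_Mmap {a b : ℕ+ → ℕ∞} {phi ψ : ℕ+ → ℕ+}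
    {hinv : ∀ j, b j ≠ ⊤ → phi (ψ j) = j} (v : T) :
    Mult b (Mmap a b phi ψ hinv v) := by
  intro j
  by_cases hb : b j = ⊤
  · rw [Mmap_apply_top hb]; exact dvd_zero _
  · rw [Mmap_apply_ne hb]; exact dvd_mul_right _ _

lemma Mmap_Mmap {a b : ℕ+ → ℕ∞} {phi ψ : ℕ+ → ℕ+} (g : Good a b phi ψ)
    {v : T} (hv : Mult a v) :
    Mmap b a ψ phi g.left (Mmap a b phi ψ g.right v) = v := by
  ext i
  by_cases ha : a i = ⊤
  · rw [Mmap_apply_top ha, hv.eq_zero ha]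
  · have hb := g.maps i ha
    rw [Mmap_apply_ne ha]
    have hψφ : ψ (phi i) = i := g.left i ha
    -- `phi (ψ ... )`?  Here the roles: Mmap b a ψ phi applied at i uses `a i ≠ ⊤`
    -- value = dd a i * (w (phi i) / dd b (phi i)) where w = Mmap a b phi ψ v
    rw [Mmap_apply_phi g ha]
    have hbpos : 0 < dd b (phi i) := dd_pos (g.hb0 _) hb
    rw [Nat.mul_div_cancel_left _ hbpos]
    exact Nat.mul_div_cancel' (hv i)

lemma psize_Mmap {a b : ℕ+ → ℕ∞} {phi ψ : ℕ+ → ℕ+} (g : Good a b phi ψ)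
    {v : T} (hv : Mult a v) :
    psize (Mmap a b phi ψ g.right v) = psize v := by
  classical
  set w := Mmap a b phi ψ g.right v with hw
  have hmem : ∀ i ∈ v.support, a i ≠ ⊤ := by
    intro i hi ht
    exact Finsupp.mem_support_iff.mp hi (hv.eq_zero ht)
  have hsub : w.support ⊆ v.support.image phi := Finsupp.support_onFinset_subset
  have h1 : psize w = ∑ j ∈ v.support.image phi, (j : ℕ) * w j :=
    Finsupp.sum_of_support_subset w hsub _ (fun j _ => mul_zero _)
  rw [h1, Finset.sum_image (fun x hx y hy hxy => by
    rw [← g.left x (hmem x hx), hxy, g.left y (hmem y hy)])]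
  refine Finset.sum_congr rfl (fun i hi => ?_)
  have ha := hmem i hi
  rw [hw, Mmap_apply_phi g ha]
  obtain ⟨q, hq⟩ := hv i
  rw [hq, Nat.mul_div_cancel_left _ (dd_pos (g.ha0 i) ha),
    ← mul_assoc, ← g.wtNat ha, mul_assoc]

lemma nset_card_eq {a b : ℕ+ → ℕ∞} {phi ψ : ℕ+ → ℕ+} (g : Good a b phi ψ) (k : ℕ) :
    Nat.card (NSet a k) = Nat.card (NSet b k) := by
  refine Nat.card_congr ⟨fun v => ⟨Mmap a b phi ψ g.right v.1, mult_Mmap v.1,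
      by rw [psize_Mmap g v.2.1]; exact v.2.2⟩,
    fun v => ⟨Mmap b a ψ phi g.symm.right v.1, mult_Mmap v.1,
      by rw [psize_Mmap g.symm v.2.1]; exact v.2.2⟩, ?_, ?_⟩
  · intro v
    apply Subtype.ext
    exact Mmap_Mmap g v.2.1
  · intro v
    apply Subtype.ext
    exact Mmap_Mmap g.symm v.2.1

lemma nset_zero (a : ℕ+ → ℕ∞) : NSet a 0 = {0} := by
  ext v
  constructor
  · rintro ⟨_, hp⟩
    exact psize_eq_zero hp
  · rintro rfl
    exact ⟨fun i => dvd_zero _, psize_zero⟩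

lemma ncard_zero (a : ℕ+ → ℕ∞) : Nat.card (NSet a 0) = 1 := by
  rw [nset_zero, Nat.card_coe_set_eq, Set.ncard_singleton]

/-! ### The main induction -/

lemma acard_eq {a b : ℕ+ → ℕ∞} {phi ψ : ℕ+ → ℕ+} (g : Good a b phi ψ) :
    ∀ n, Nat.card (ASet a n) = Nat.card (ASet b n) := by
  intro n
  induction n using Nat.strong_induction_on with
  | _ n ih =>
    have key : ∑ m ∈ Finset.range (n + 1), Nat.card (ASet a m) * Nat.card (NSet a (n - m)) =
        ∑ m ∈ Finset.range (n + 1), Nat.card (ASet b m) * Nat.card (NSet b (n - m)) := by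
      rw [← dset_card g.ha0 n, ← dset_card g.hb0 n]
    have hN : ∀ k, Nat.card (NSet a k) = Nat.card (NSet b k) := nset_card_eq g
    rw [Finset.sum_range_succ, Finset.sum_range_succ] at key
    have hsums : ∑ m ∈ Finset.range n, Nat.card (ASet a m) * Nat.card (NSet a (n - m)) =
        ∑ m ∈ Finset.range n, Nat.card (ASet b m) * Nat.card (NSet b (n - m)) := by
      refine Finset.sum_congr rfl (fun m hm => ?_)
      rw [ih m (Finset.mem_range.mp hm), hN]
    rw [hsums] at key
    have := Nat.add_left_cancel key
    rwa [Nat.sub_self, ncard_zero, ncard_zero, mul_one, mul_one] at this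

end OharaAux

/-- if `a ∼_φ b`, then for every `n` the sets `𝒜_n` and `ℬ_n`
are finite and have the same cardinality. -/
theorem ohara_andrews_card (a b : ℕ+ → ℕ∞) (phi : ℕ+ → ℕ+)
    (h : PhiEquiv a b phi) (n : ℕ) :
    {lam : ℕ+ →₀ ℕ | InA a lam ∧ psize lam = n}.Finite ∧
    {lam : ℕ+ →₀ ℕ | InA b lam ∧ psize lam = n}.Finite ∧
    Nat.card {lam : ℕ+ →₀ ℕ | InA a lam ∧ psize lam = n} =
      Nat.card {lam : ℕ+ →₀ ℕ | InA b lam ∧ psize lam = n} := by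
  obtain ⟨ψ, g⟩ := OharaAux.exists_good h
  exact ⟨OharaAux.ASet_finite a n, OharaAux.ASet_finite b n, OharaAux.acard_eq g n⟩
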